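/- Let h : EuclideanSpace ℝ (Fin n) → ℝ be twice continuously differentiable and bounded from below, and suppose there is a constant M > 0 such that the operator norm of the second Fréchet derivative of h is at most M at every point. Let (α_k) be positive step sizes, let K₀ be a natural number with α_k ≤ 1/M for all k ≥ K₀, and define gradient-descent iterates by w_{k+1} = w_k − α_k • ∇h(w_k). Then the sequence h(w_k) converges, the series ∑_k α_k ‖∇h(w_k)‖² converges, and if moreover ∑_k α_k = ∞, then liminf_{k→∞} ‖∇h(w_k)‖ = 0. -/

import Mathlib

open Filter

lemma grad_inner {n : ℕ} (h : EuclideanSpace ℝ (Fin n) → ℝ) (z v : EuclideanSpace ℝ (Fin n)) :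
    (inner ℝ (gradient h z) v : ℝ) = fderiv ℝ h z v := by
  rw [gradient, InnerProductSpace.toDual_symm_apply]

lemma descent {n : ℕ} (h : EuclideanSpace ℝ (Fin n) → ℝ) (hh : ContDiff ℝ 2 h)
    (M : ℝ) (hM0 : 0 ≤ M)
    (lip : ∀ x y, ‖gradient h x - gradient h y‖ ≤ M * ‖x - y‖)
    (x y : EuclideanSpace ℝ (Fin n)) :
    h y ≤ h x + inner ℝ (gradient h x) (y - x) + M / 2 * ‖y - x‖ ^ 2 := by
  set v := y - x with hv
  set φ : ℝ → ℝ := fun t => inner ℝ (gradient h (x + t • v)) v with hφ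
  have hdiff : Differentiable ℝ h := hh.differentiable two_ne_zero
  have hder : ∀ t : ℝ, HasDerivAt (fun s : ℝ => h (x + s • v)) (φ t) t := by
    intro t
    have hc : HasDerivAt (fun s : ℝ => x + s • v) v t := by
      simpa using ((hasDerivAt_id t).smul_const v).const_add x
    have H := (hdiff (x + t • v)).hasFDerivAt.comp_hasDerivAt t hc
    simp only [hφ]
    rw [grad_inner]
    exact H
  have hcont : Continuous φ := by
    have h1 : Continuous (fun t : ℝ => gradient h (x + t • v)) := by
      have : Continuous (gradient h) := by
        have := (hh.continuous_fderiv two_ne_zero)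
        exact (InnerProductSpace.toDual ℝ (EuclideanSpace ℝ (Fin n))).symm.continuous.comp this
      exact this.comp (continuous_const.add (continuous_id.smul continuous_const))
    exact (h1.inner continuous_const)
  have hint : intervalIntegral φ 0 1 MeasureTheory.volume = h y - h x := by
    have := intervalIntegral.integral_eq_sub_of_hasDerivAt
      (f := fun s : ℝ => h (x + s • v)) (f' := φ)
      (fun t _ => hder t) (hcont.intervalIntegrable 0 1)
    simpa [hv] using this
  have hbound : ∀ t ∈ Set.Icc (0:ℝ) 1, φ t ≤ φ 0 + M * ‖v‖ ^ 2 * t := by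
    intro t ht
    have h1 : φ t - φ 0 = inner ℝ (gradient h (x + t • v) - gradient h (x + (0:ℝ) • v)) v := by
      rw [inner_sub_left]
    have h2 : φ t - φ 0 ≤ M * ‖v‖ ^ 2 * t := by
      rw [h1]
      calc (inner ℝ (gradient h (x + t • v) - gradient h (x + (0:ℝ) • v)) v : ℝ)
          ≤ ‖gradient h (x + t • v) - gradient h (x + (0:ℝ) • v)‖ * ‖v‖ :=
            real_inner_le_norm _ _
        _ ≤ (M * ‖(x + t • v) - (x + (0:ℝ) • v)‖) * ‖v‖ := by
            gcongr; exact lip _ _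
        _ = M * ‖v‖ ^ 2 * t := by
            have : (x + t • v) - (x + (0:ℝ) • v) = t • v := by
              simp
            rw [this, norm_smul]
            rw [Real.norm_eq_abs, abs_of_nonneg ht.1]
            ring
    linarith
  have hInt2 : intervalIntegral φ 0 1 MeasureTheory.volume
      ≤ φ 0 + M / 2 * ‖v‖ ^ 2 := by
    have hIle : intervalIntegral φ 0 1 MeasureTheory.volume
        ≤ ∫ t in (0:ℝ)..1, (φ 0 + M * ‖v‖ ^ 2 * t) := by
      apply intervalIntegral.integral_mono_on zero_le_one (hcont.intervalIntegrable 0 1)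
      · exact ((continuous_const.add (continuous_const.mul continuous_id)).intervalIntegrable 0 1)
      · exact hbound
    have : (∫ t in (0:ℝ)..1, (φ 0 + M * ‖v‖ ^ 2 * t)) = φ 0 + M / 2 * ‖v‖ ^ 2 := by
      rw [intervalIntegral.integral_add (f := fun _ => φ 0) (g := fun t => M * ‖v‖ ^ 2 * t) (intervalIntegrable_const)
        ((continuous_const.mul continuous_id').intervalIntegrable 0 1)]
      rw [intervalIntegral.integral_const_mul, integral_id]
      simp
      ring
    linarith
  have hφ0 : φ 0 = inner ℝ (gradient h x) v := by simp [hφ]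
  have : h y - h x ≤ φ 0 + M / 2 * ‖v‖ ^ 2 := by rw [← hint]; exact hInt2
  rw [hφ0] at this
  linarith
lemma grad_lip {n : ℕ} (h : EuclideanSpace ℝ (Fin n) → ℝ) (hh : ContDiff ℝ 2 h)
    (M : ℝ) (hM0 : 0 ≤ M) (hM2 : ∀ x, ‖iteratedFDeriv ℝ 2 h x‖ ≤ M) (x y) :
    ‖gradient h x - gradient h y‖ ≤ M * ‖x - y‖ := by
  have hd : Differentiable ℝ (fderiv ℝ h) :=
    (hh.fderiv_right (m := 1) (by norm_num)).differentiable one_ne_zero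
  have hb : ∀ z, ‖fderiv ℝ (fderiv ℝ h) z‖ ≤ M := by
    intro z
    have h1 : ‖iteratedFDeriv ℝ 0 (fderiv ℝ (fderiv ℝ h)) z‖
        = ‖iteratedFDeriv ℝ 1 (fderiv ℝ h) z‖ := by
      rw [← norm_iteratedFDeriv_fderiv]
    have h2 : ‖iteratedFDeriv ℝ 1 (fderiv ℝ h) z‖ = ‖iteratedFDeriv ℝ 2 h z‖ :=
      norm_iteratedFDeriv_fderiv
    calc ‖fderiv ℝ (fderiv ℝ h) z‖ = ‖iteratedFDeriv ℝ 0 (fderiv ℝ (fderiv ℝ h)) z‖ := by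
          simp [norm_iteratedFDeriv_zero]
      _ = ‖iteratedFDeriv ℝ 2 h z‖ := by rw [h1, h2]
      _ ≤ M := hM2 z
  have lipf : LipschitzWith M.toNNReal (fderiv ℝ h) :=
    lipschitzWith_of_nnnorm_fderiv_le hd (fun z => by
      rw [← norm_toNNReal]
      exact Real.toNNReal_mono (hb z))
  have lipg : LipschitzWith M.toNNReal (gradient h) := by
    have := ((InnerProductSpace.toDual ℝ (EuclideanSpace ℝ (Fin n))).symm.lipschitz.comp lipf)
    rw [one_mul] at this
    exact this
  have := lipg.dist_le_mul x y
  rwa [Real.coe_toNNReal M hM0, dist_eq_norm, dist_eq_norm] at this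

set_option maxHeartbeats 1000000 in
/-- Convergence of gradient descent on a twice continuously differentiable function
bounded below with second derivative bounded in operator norm by `M`, using step sizes
eventually bounded by `1/M`: the function values converge, the series
`∑ α_k ‖∇h(w_k)‖²` converges, and if `∑ α_k = ∞` then `liminf ‖∇h(w_k)‖ = 0`. -/
theorem stmt_2 {n : ℕ} (h : EuclideanSpace ℝ (Fin n) → ℝ)
    (hh : ContDiff ℝ 2 h) (hbdd : BddBelow (Set.range h))
    (M : ℝ) (hM : 0 < M) (hM2 : ∀ x, ‖iteratedFDeriv ℝ 2 h x‖ ≤ M)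
    (α : ℕ → ℝ) (hα : ∀ k, 0 < α k)
    (K₀ : ℕ) (hαM : ∀ k ≥ K₀, α k ≤ 1 / M)
    (w : ℕ → EuclideanSpace ℝ (Fin n))
    (hupd : ∀ k, w (k + 1) = w k - α k • gradient h (w k)) :
    (∃ l, Tendsto (fun k => h (w k)) atTop (nhds l)) ∧
    Summable (fun k => α k * ‖gradient h (w k)‖ ^ 2) ∧
    (Tendsto (fun N => ∑ k ∈ Finset.range N, α k) atTop atTop →
      liminf (fun k => ‖gradient h (w k)‖) atTop = 0) := by
  set g : ℕ → EuclideanSpace ℝ (Fin n) := fun k => gradient h (w k) with hg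
  have lip := grad_lip h hh M hM.le hM2
  -- the key one-step decrease
  have step : ∀ k ≥ K₀, h (w (k + 1)) + α k / 2 * ‖g k‖ ^ 2 ≤ h (w k) := by
    intro k hk
    have hd := descent h hh M hM.le lip (w k) (w (k + 1))
    have hsub : w (k + 1) - w k = -(α k • g k) := by rw [hupd k]; abel
    have hin : (inner ℝ (g k) (w (k + 1) - w k) : ℝ) = -(α k * ‖g k‖ ^ 2) := by
      rw [hsub, inner_neg_right, real_inner_smul_right, real_inner_self_eq_norm_sq]
    have hnn : ‖w (k + 1) - w k‖ ^ 2 = α k ^ 2 * ‖g k‖ ^ 2 := by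
      rw [hsub, norm_neg, norm_smul, Real.norm_eq_abs, abs_of_pos (hα k)]
      ring
    rw [hin, hnn] at hd
    have hα1 : M * α k ≤ 1 := by
      have := hαM k hk
      rw [le_div_iff₀ hM] at this
      linarith
    nlinarith [sq_nonneg (‖g k‖), (hα k), sq_nonneg (α k)]
  obtain ⟨c, hc⟩ := hbdd
  have hcle : ∀ z, c ≤ h z := fun z => hc ⟨z, rfl⟩
  -- monotone decreasing tail
  have anti : Antitone (fun k => h (w (k + K₀))) := by
    apply antitone_nat_of_succ_le
    intro k
    have := step (k + K₀) (Nat.le_add_left _ _)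
    have h2 : 0 ≤ α (k + K₀) / 2 * ‖g (k + K₀)‖ ^ 2 :=
      mul_nonneg (by linarith [(hα (k + K₀)).le]) (sq_nonneg _)
    calc h (w (k + 1 + K₀)) = h (w (k + K₀ + 1)) := by ring_nf
      _ ≤ h (w (k + K₀)) := by linarith
  have hbd : BddBelow (Set.range fun k => h (w (k + K₀))) :=
    ⟨c, fun z ⟨k, hk⟩ => hk ▸ hcle _⟩
  have conv : ∃ l, Tendsto (fun k => h (w k)) atTop (nhds l) := by
    refine ⟨⨅ k, h (w (k + K₀)), ?_⟩
    have := tendsto_atTop_ciInf anti hbd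
    exact (tendsto_add_atTop_iff_nat K₀).mp this
  -- telescoping sum bound
  have tele : ∀ N, ∑ i ∈ Finset.range N, α (i + K₀) / 2 * ‖g (i + K₀)‖ ^ 2
      ≤ h (w K₀) - h (w (N + K₀)) := by
    intro N
    induction N with
    | zero => simp
    | succ N ih =>
      rw [Finset.sum_range_succ]
      have := step (N + K₀) (Nat.le_add_left _ _)
      have e : N + 1 + K₀ = N + K₀ + 1 := by ring
      rw [e]
      linarith
  have summ : Summable (fun k => α k * ‖g k‖ ^ 2) := by
    rw [← summable_nat_add_iff K₀]
    apply summable_of_sum_range_le (c := 2 * (h (w K₀) - c))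
    · intro k; exact mul_nonneg (hα _).le (sq_nonneg _)
    · intro N
      have h1 := tele N
      have h2 := hcle (w (N + K₀))
      have h3 : ∑ i ∈ Finset.range N, α (i + K₀) * ‖g (i + K₀)‖ ^ 2
          = 2 * ∑ i ∈ Finset.range N, α (i + K₀) / 2 * ‖g (i + K₀)‖ ^ 2 := by
        rw [Finset.mul_sum]; congr 1; ext i; ring
      rw [h3]; linarith
  refine ⟨conv, summ, ?_⟩
  intro hdiv
  -- frequently small gradients
  have freq : ∀ ε : ℝ, 0 < ε → ∃ᶠ k in atTop, ‖g k‖ < ε := by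
    intro ε hε
    by_contra hcon
    rw [not_frequently] at hcon
    simp only [not_lt] at hcon
    obtain ⟨N, hN⟩ := eventually_atTop.mp hcon
    have hsum2 : Summable (fun k => α (k + N) * ‖g (k + N)‖ ^ 2) :=
      (summable_nat_add_iff N).mpr summ
    have hsum3 : Summable (fun k => α (k + N) * ε ^ 2) := by
      apply Summable.of_nonneg_of_le (fun k => mul_nonneg (hα _).le (sq_nonneg _)) _ hsum2
      intro k
      have h1 := hN (k + N) (Nat.le_add_left _ _)
      have h2 : ε ^ 2 ≤ ‖g (k + N)‖ ^ 2 := pow_le_pow_left₀ hε.le h1 2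
      exact mul_le_mul_of_nonneg_left h2 (hα _).le
    have hsumα : Summable (fun k => α (k + N)) := by
      have := hsum3.mul_right ((ε ^ 2)⁻¹)
      have hε2 : (ε : ℝ) ^ 2 ≠ 0 := by positivity
      simpa [mul_assoc, mul_inv_cancel₀ hε2] using this
    have hsumα' : Summable α := (summable_nat_add_iff N).mp hsumα
    exact not_tendsto_atTop_of_tendsto_nhds hsumα'.hasSum.tendsto_sum_nat hdiv
  have hbdu : IsBoundedUnder (· ≥ ·) atTop (fun k => ‖g k‖) :=
    isBoundedUnder_of ⟨0, fun k => norm_nonneg _⟩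
  have hcb : IsCoboundedUnder (· ≥ ·) atTop (fun k => ‖g k‖) := by
    refine ⟨1, fun a ha => ?_⟩
    rw [Filter.eventually_map] at ha
    obtain ⟨k, hk1, hk2⟩ := (ha.and_frequently (freq 1 one_pos)).exists
    exact le_of_lt (lt_of_le_of_lt hk1 hk2)
  apply le_antisymm
  · by_contra hpos
    push_neg at hpos
    have hL := liminf_le_of_frequently_le
      ((freq (liminf (fun k => ‖g k‖) atTop / 2) (by linarith)).mono fun k hk => hk.le) hbdu
    linarith
  · exact le_liminf_of_le hcb (Eventually.of_forall fun k => norm_nonneg _)
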